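/- Let T = (t_{ijkl}) be a 4th-order 2-dimensional symmetric tensor with real entries satisfying t_{1111} = t_{2222} = 1, |t_{1112}| = |t_{1222}| = |t_{1122}| = 1. Then T is positive definite if and only if t_{1122} = 1 and t_{1112}·t_{1222} = -1. -/
import Mathlib

lemma aux_pos (x1 x2 : ℝ) (hx : (x1, x2) ≠ (0, 0)) :
    0 < x1^4 + 4*x1^3*x2 + 6*x1^2*x2^2 - 4*x1*x2^3 + x2^4 := by
  rcases eq_or_ne x1 0 with h1 | h1
  · have h2 : x2 ≠ 0 := by
      intro h2; exact hx (by simp [h1, h2])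
    subst h1
    have : (0:ℝ) < x2^4 := by positivity
    nlinarith
  · rcases eq_or_ne x2 0 with h2 | h2
    · subst h2
      have : (0:ℝ) < x1^4 := by positivity
      nlinarith
    · have : (0:ℝ) < x1^2 * x2^2 := by positivity
      nlinarith [sq_nonneg (x1^2 + 2*x1*x2 - x2^2)]

/-- **Lemma 2.2(ii).** A 4th-order 2-dimensional symmetric tensor with
`t1111 = t2222 = 1` and `|t1112| = |t1222| = |t1122| = 1` is positive definite
if and only if `t1122 = 1` and `t1112 * t1222 = -1`. -/
theorem stmt_3 (t1111 t1112 t1122 t1222 t2222 : ℝ)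
    (h1111 : t1111 = 1) (h2222 : t2222 = 1)
    (h1112 : |t1112| = 1) (h1222 : |t1222| = 1) (h1122 : |t1122| = 1) :
    (∀ x1 x2 : ℝ, (x1, x2) ≠ (0, 0) →
      0 < t1111 * x1^4 + 4 * t1112 * x1^3 * x2 + 6 * t1122 * x1^2 * x2^2
        + 4 * t1222 * x1 * x2^3 + t2222 * x2^4) ↔
    (t1122 = 1 ∧ t1112 * t1222 = -1) := by
  subst h1111 h2222
  rcases (abs_eq (by norm_num : (0:ℝ) ≤ 1)).mp h1112 with ha | ha <;>
  rcases (abs_eq (by norm_num : (0:ℝ) ≤ 1)).mp h1222 with hb | hb <;>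
  rcases (abs_eq (by norm_num : (0:ℝ) ≤ 1)).mp h1122 with hc | hc <;>
  subst ha <;> subst hb <;> subst hc <;>
  constructor <;>
  first
  | (intro h; refine ⟨rfl, ?_⟩; norm_num; done)
  | (intro h; refine absurd (h 1 (-1) (by norm_num)) ?_; norm_num; done)
  | (intro h; refine absurd (h 1 1 (by norm_num)) ?_; norm_num; done)
  | (rintro ⟨h1, h2⟩; intro x1 x2 hx
     first
     | (have := aux_pos x1 x2 hx; nlinarith)
     | (have := aux_pos (-x1) x2 (by simpa using (by
          intro h'; exact hx (by simpa [neg_eq_zero] using h') : (-x1, x2) ≠ (0,0)))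
        nlinarith))
  | (rintro ⟨h1, h2⟩; norm_num at h1 h2)
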